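/- Let T, S : H₁ → H₂ be bounded operators between Hilbert spaces, P : H₁ → H₁ an orthogonal projection, α > 0, B ∈ H₁, g = TB, and g̃ ∈ H₂. Let B_α = (T*T+αI)⁻¹T*g and B̂_α = (PS*SP + αI)⁻¹PS* g̃. Then ‖B_α − B̂_α‖ ≤ (‖T − S‖/√α)‖B‖ + (‖S − SP‖/√α)‖B‖ + ‖g − g̃‖/(2√α). -/

import Mathlib

open ContinuousLinearMap
open scoped RealInnerProductSpace

section TikAux

variable {H₁ H₂ : Type*}
    [NormedAddCommGroup H₁] [InnerProductSpace ℝ H₁] [CompleteSpace H₁]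
    [NormedAddCommGroup H₂] [InnerProductSpace ℝ H₂] [CompleteSpace H₂]

/-- basic energy identity for the normal equation -/
lemma tik_inner (A : H₁ →L[ℝ] H₂) (α : ℝ) (y z : H₁)
    (h : adjoint A (A y) + α • y = z) :
    ‖A y‖ ^ 2 + α * ‖y‖ ^ 2 = ⟪z, y⟫ := by
  rw [← h, inner_add_left, real_inner_smul_left, adjoint_inner_left,
    real_inner_self_eq_norm_sq, real_inner_self_eq_norm_sq]

/-- L1 : `α‖y‖ ≤ ‖z‖` -/
lemma tik_L1 (A : H₁ →L[ℝ] H₂) {α : ℝ} (hα : 0 < α) (y z : H₁)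
    (h : adjoint A (A y) + α • y = z) :
    α * ‖y‖ ≤ ‖z‖ := by
  have key := tik_inner A α y z h
  have hiz : ⟪z, y⟫ ≤ ‖z‖ * ‖y‖ := real_inner_le_norm z y
  rcases eq_or_lt_of_le (norm_nonneg y) with h0 | h0
  · rw [← h0]; simpa using norm_nonneg z
  · have : α * ‖y‖ * ‖y‖ ≤ ‖z‖ * ‖y‖ := by nlinarith [sq_nonneg ‖A y‖]
    exact le_of_mul_le_mul_right this h0

/-- L2 : `2√α‖y‖ ≤ ‖u‖` when the right hand side is `A* u` -/
lemma tik_L2 (A : H₁ →L[ℝ] H₂) {α : ℝ} (hα : 0 < α) (y : H₁) (u : H₂)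
    (h : adjoint A (A y) + α • y = adjoint A u) :
    2 * Real.sqrt α * ‖y‖ ≤ ‖u‖ := by
  have key := tik_inner A α y (adjoint A u) h
  have hiz : ⟪adjoint A u, y⟫ ≤ ‖u‖ * ‖A y‖ := by
    rw [adjoint_inner_left]
    exact real_inner_le_norm u (A y)
  have hs : Real.sqrt α ^ 2 = α := Real.sq_sqrt hα.le
  have hsq : (2 * Real.sqrt α * ‖y‖) ^ 2 ≤ ‖u‖ ^ 2 := by
    have : 4 * (α * ‖y‖ ^ 2) ≤ ‖u‖ ^ 2 := by
      nlinarith [sq_nonneg (‖A y‖ - ‖u‖ / 2)]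
    calc (2 * Real.sqrt α * ‖y‖) ^ 2 = 4 * (Real.sqrt α ^ 2 * ‖y‖ ^ 2) := by ring
      _ = 4 * (α * ‖y‖ ^ 2) := by rw [hs]
      _ ≤ ‖u‖ ^ 2 := this
  have h1 : 0 ≤ 2 * Real.sqrt α * ‖y‖ := by positivity
  nlinarith [norm_nonneg u]

/-- L3 : `2√α‖Ay‖ ≤ ‖z‖` -/
lemma tik_L3 (A : H₁ →L[ℝ] H₂) {α : ℝ} (hα : 0 < α) (y z : H₁)
    (h : adjoint A (A y) + α • y = z) :
    2 * Real.sqrt α * ‖A y‖ ≤ ‖z‖ := by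
  have hz2 : ‖z‖ ^ 2 = ‖adjoint A (A y)‖ ^ 2 + 2 * α * ‖A y‖ ^ 2 + α ^ 2 * ‖y‖ ^ 2 := by
    rw [← h, norm_add_sq_real, real_inner_smul_right, adjoint_inner_left,
      real_inner_self_eq_norm_sq, norm_smul, Real.norm_of_nonneg hα.le, mul_pow]
    ring
  have hAy : ‖A y‖ ^ 2 ≤ ‖adjoint A (A y)‖ * ‖y‖ := by
    have : (‖A y‖ : ℝ) ^ 2 = ⟪adjoint A (A y), y⟫ := by
      rw [adjoint_inner_left, real_inner_self_eq_norm_sq]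
    rw [this]
    exact real_inner_le_norm _ _
  have hs : Real.sqrt α ^ 2 = α := Real.sq_sqrt hα.le
  have hsq : (2 * Real.sqrt α * ‖A y‖) ^ 2 ≤ ‖z‖ ^ 2 := by
    have h4 : 4 * (α * ‖A y‖ ^ 2) ≤ ‖z‖ ^ 2 := by
      nlinarith [sq_nonneg (‖adjoint A (A y)‖ - α * ‖y‖), norm_nonneg y,
        norm_nonneg (adjoint A (A y)), hα]
    calc (2 * Real.sqrt α * ‖A y‖) ^ 2 = 4 * (Real.sqrt α ^ 2 * ‖A y‖ ^ 2) := by ring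
      _ = 4 * (α * ‖A y‖ ^ 2) := by rw [hs]
      _ ≤ ‖z‖ ^ 2 := h4
  have h1 : 0 ≤ 2 * Real.sqrt α * ‖A y‖ := by positivity
  nlinarith [norm_nonneg z]

/-- solutions of the regularized normal equation are unique -/
lemma tik_uniq (A : H₁ →L[ℝ] H₂) {α : ℝ} (hα : 0 < α) (y y' : H₁)
    (h : adjoint A (A y) + α • y = adjoint A (A y') + α • y') : y = y' := by
  have hd : adjoint A (A (y - y')) + α • (y - y') = (0 : H₁) := by
    rw [map_sub, map_sub, smul_sub]
    rw [sub_add_sub_comm, h, sub_self]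
  have := tik_L1 A hα (y - y') 0 hd
  have h0 : ‖y - y'‖ ≤ 0 := by
    simp only [norm_zero] at this
    nlinarith [norm_nonneg (y - y')]
  have : y - y' = 0 := by
    rw [← norm_le_zero_iff]
    exact h0
  exact sub_eq_zero.mp this

/-- surjectivity of `A*A + α` (Lax-Milgram style) -/
lemma tik_surj (A : H₁ →L[ℝ] H₂) {α : ℝ} (hα : 0 < α) (z : H₁) :
    ∃ y : H₁, adjoint A (A y) + α • y = z := by
  set M : H₁ →L[ℝ] H₁ := adjoint A ∘L A + α • ContinuousLinearMap.id ℝ H₁ with hM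
  have hMapp : ∀ y, M y = adjoint A (A y) + α • y := by
    intro y; simp [hM]
  have hMinner : ∀ y, ⟪M y, y⟫ = ‖A y‖ ^ 2 + α * ‖y‖ ^ 2 := by
    intro y
    rw [hMapp y, inner_add_left, real_inner_smul_left, adjoint_inner_left,
      real_inner_self_eq_norm_sq, real_inner_self_eq_norm_sq]
  have hbelow : ∀ y, α * ‖y‖ ≤ ‖M y‖ := fun y => tik_L1 A hα y (M y) (hMapp y).symm
  -- M is antilipschitz
  have hanti : AntilipschitzWith (Real.toNNReal α)⁻¹ M := by
    apply ContinuousLinearMap.antilipschitz_of_bound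
    intro y
    have hb := hbelow y
    rw [NNReal.coe_inv, Real.coe_toNNReal _ hα.le, inv_mul_eq_div, le_div_iff₀ hα]
    nlinarith
  have hinj : Function.Injective M := hanti.injective
  have hclosed : IsClosed (LinearMap.range (M : H₁ →ₗ[ℝ] H₁) : Set H₁) := by
    rw [LinearMap.coe_range]; exact hanti.isClosed_range M.uniformContinuous
  -- range is all of H₁
  have hrange : LinearMap.range (M : H₁ →ₗ[ℝ] H₁) = ⊤ := by
    haveI := hclosed.completeSpace_coe
    rw [← (LinearMap.range (M : H₁ →ₗ[ℝ] H₁)).orthogonal_orthogonal]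
    rw [Submodule.eq_top_iff']
    intro v w hw
    obtain rfl : w = 0 := by
      have h0 : ⟪M w, w⟫ = 0 := hw (M w) ⟨w, rfl⟩
      have := hMinner w
      rw [h0] at this
      have hn : ‖w‖ ^ 2 ≤ 0 := by nlinarith [sq_nonneg ‖A w‖]
      have : ‖w‖ = 0 := by nlinarith [norm_nonneg w]
      exact norm_eq_zero.mp this
    exact inner_zero_left _
  obtain ⟨y, hy⟩ : ∃ y, M y = z := by
    have : z ∈ LinearMap.range (M : H₁ →ₗ[ℝ] H₁) := hrange ▸ Submodule.mem_top
    exact this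
  exact ⟨y, by rw [← hMapp y, hy]⟩

/-- `‖Bα‖ ≤ ‖B‖` for the noise-free regularized solution -/
lemma tik_norm_le (A : H₁ →L[ℝ] H₂) {α : ℝ} (hα : 0 < α) (x b : H₁)
    (h : adjoint A (A x) + α • x = adjoint A (A b)) : ‖x‖ ≤ ‖b‖ := by
  have h1 : ⟪adjoint A (A x) + α • x, x - b⟫ = ⟪adjoint A (A b), x - b⟫ := by rw [h]
  rw [inner_add_left, real_inner_smul_left, adjoint_inner_left, adjoint_inner_left] at h1
  have h2 : ⟪A x, A (x - b)⟫ - ⟪A b, A (x - b)⟫ + α * ⟪x, x - b⟫ = 0 := by linarith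
  rw [← inner_sub_left, ← map_sub] at h2
  rw [real_inner_self_eq_norm_sq] at h2
  have h3 : α * ⟪x, x - b⟫ ≤ 0 := by nlinarith [sq_nonneg ‖A (x - b)‖]
  have h4 : ⟪x, x - b⟫ ≤ 0 := by nlinarith
  rw [inner_sub_right, real_inner_self_eq_norm_sq] at h4
  have h5 : ‖x‖ ^ 2 ≤ ⟪x, b⟫ := by linarith
  have h6 : ⟪x, b⟫ ≤ ‖x‖ * ‖b‖ := real_inner_le_norm x b
  rcases eq_or_lt_of_le (norm_nonneg x) with h0 | h0
  · rw [← h0]; exact norm_nonneg b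
  · nlinarith

end TikAux

set_option maxHeartbeats 1000000 in
/-- Galerkin/Tikhonov error estimate: with `P` an orthogonal projection,
`g = TB`, `Bα = (T*T+αI)⁻¹T*g` and `B̂α = (PS*SP+αI)⁻¹PS*g̃` (characterized by
their normal equations), one has
`‖Bα − B̂α‖ ≤ (‖T−S‖/√α)‖B‖ + (‖S−SP‖/√α)‖B‖ + ‖g−g̃‖/(2√α)`. -/
theorem stmt13 {H₁ H₂ : Type*}
    [NormedAddCommGroup H₁] [InnerProductSpace ℝ H₁] [CompleteSpace H₁]
    [NormedAddCommGroup H₂] [InnerProductSpace ℝ H₂] [CompleteSpace H₂]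
    (T S : H₁ →L[ℝ] H₂) (P : H₁ →L[ℝ] H₁)
    (hP2 : P ∘L P = P) (hPsa : ∀ x y : H₁, ⟪P x, y⟫ = ⟪x, P y⟫)
    (α : ℝ) (hα : 0 < α)
    (B Bα Bhα : H₁) (g gt : H₂) (hg : g = T B)
    (hBα : (adjoint T) (T Bα) + α • Bα = (adjoint T) g)
    (hBhα : P ((adjoint S) (S (P Bhα))) + α • Bhα = P ((adjoint S) gt)) :
    ‖Bα - Bhα‖ ≤ ‖T - S‖ / Real.sqrt α * ‖B‖ + ‖S - S ∘L P‖ / Real.sqrt α * ‖B‖ +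
      ‖g - gt‖ / (2 * Real.sqrt α) := by
  -- P is self-adjoint
  have hPadj : adjoint P = P := by
    have : IsSelfAdjoint P :=
      ContinuousLinearMap.isSelfAdjoint_iff_isSymmetric.mpr (fun x y => hPsa x y)
    exact this
  set Q : H₁ →L[ℝ] H₂ := S ∘L P with hQdef
  have hQadj : ∀ z : H₂, adjoint Q z = P (adjoint S z) := by
    intro z
    rw [hQdef, adjoint_comp, hPadj]
    rfl
  have hQapp : ∀ x : H₁, Q x = S (P x) := fun x => rfl
  -- the normal equation for Bhα in terms of Q
  have hQeq : adjoint Q (Q Bhα) + α • Bhα = adjoint Q gt := by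
    rw [hQadj, hQadj, hQapp]
    exact hBhα
  -- the normal equation for Bα with g = T B
  have hBα' : adjoint T (T Bα) + α • Bα = adjoint T (T B) := by rw [← hg]; exact hBα
  -- w := B - Bα satisfies (T*T+α) w = α B
  have hw : adjoint T (T (B - Bα)) + α • (B - Bα) = α • B := by
    rw [map_sub, map_sub, smul_sub]
    have : adjoint T (T Bα) = adjoint T (T B) - α • Bα := by
      rw [← hBα']; abel
    rw [this]; abel
  -- intermediates
  obtain ⟨C, hC⟩ := tik_surj Q hα (adjoint Q g)
  obtain ⟨n₁, hn₁⟩ := tik_surj Q hα (adjoint Q ((T - Q) Bα))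
  obtain ⟨d₂, hd₂⟩ := tik_surj Q hα (adjoint (T - Q) (T (B - Bα)))
  -- key identity : Bα - C = -n₁ + d₂
  have hkey : Bα - C = -n₁ + d₂ := by
    apply tik_uniq Q hα _ _
    have lhs_eq : adjoint Q (Q (Bα - C)) + α • (Bα - C)
        = (adjoint Q (Q Bα) + α • Bα) - (adjoint Q (Q C) + α • C) := by
      rw [map_sub, map_sub, smul_sub]; abel
    have rhs_eq : adjoint Q (Q (-n₁ + d₂)) + α • (-n₁ + d₂)
        = -(adjoint Q (Q n₁) + α • n₁) + (adjoint Q (Q d₂) + α • d₂) := by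
      rw [map_add, map_add, map_neg, map_neg, smul_add, smul_neg]; abel
    rw [lhs_eq, rhs_eq, hC, hn₁, hd₂]
    have hBαsub : α • Bα = adjoint T (T B) - adjoint T (T Bα) := by
      rw [← hBα']; abel
    rw [hg, hBαsub]
    simp only [ContinuousLinearMap.sub_apply, map_sub, ContinuousLinearMap.sub_apply]
    abel
  -- f := C - Bhα satisfies (Q*Q+α) f = Q*(g - gt)
  have hf : adjoint Q (Q (C - Bhα)) + α • (C - Bhα) = adjoint Q (g - gt) := by
    rw [map_sub, map_sub, smul_sub, map_sub]
    rw [sub_add_sub_comm, hC, hQeq]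
  -- Norm estimates
  set s := Real.sqrt α with hs
  have hspos : 0 < s := Real.sqrt_pos.mpr hα
  have hs2 : s ^ 2 = α := Real.sq_sqrt hα.le
  -- ‖Bα‖ ≤ ‖B‖
  have hBαle : ‖Bα‖ ≤ ‖B‖ := tik_norm_le T hα Bα B hBα'
  -- bound for n₁
  have hn₁le : 2 * s * ‖n₁‖ ≤ ‖T - Q‖ * ‖B‖ := by
    have h1 : 2 * s * ‖n₁‖ ≤ ‖(T - Q) Bα‖ := tik_L2 Q hα n₁ ((T - Q) Bα) hn₁
    have h2 : ‖(T - Q) Bα‖ ≤ ‖T - Q‖ * ‖Bα‖ := (T - Q).le_opNorm Bα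
    have h3 : ‖T - Q‖ * ‖Bα‖ ≤ ‖T - Q‖ * ‖B‖ :=
      mul_le_mul_of_nonneg_left hBαle (norm_nonneg _)
    linarith
  -- bound for d₂
  have hTw : 2 * s * ‖T (B - Bα)‖ ≤ α * ‖B‖ := by
    have := tik_L3 T hα (B - Bα) (α • B) hw
    rwa [norm_smul, Real.norm_of_nonneg hα.le] at this
  have hd₂le : 2 * s * ‖d₂‖ ≤ ‖T - Q‖ * ‖B‖ := by
    have h1 : α * ‖d₂‖ ≤ ‖adjoint (T - Q) (T (B - Bα))‖ := tik_L1 Q hα d₂ _ hd₂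
    have h2 : ‖adjoint (T - Q) (T (B - Bα))‖ ≤ ‖T - Q‖ * ‖T (B - Bα)‖ := by
      calc ‖adjoint (T - Q) (T (B - Bα))‖ ≤ ‖adjoint (T - Q)‖ * ‖T (B - Bα)‖ :=
            (adjoint (T - Q)).le_opNorm _
        _ = ‖T - Q‖ * ‖T (B - Bα)‖ := by
            rw [(ContinuousLinearMap.adjoint :
              (H₁ →L[ℝ] H₂) ≃ₗᵢ⋆[ℝ] (H₂ →L[ℝ] H₁)).norm_map (T - Q)]
    have hd2' : α * (2 * s * ‖d₂‖) ≤ α * (‖T - Q‖ * ‖B‖) := by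
      have ha := mul_le_mul_of_nonneg_left (h1.trans h2) (by positivity : (0:ℝ) ≤ 2 * s)
      have hb := mul_le_mul_of_nonneg_left hTw (norm_nonneg (T - Q))
      ring_nf at ha hb ⊢
      linarith
    exact le_of_mul_le_mul_left hd2' hα
  -- bound for f
  have hfle : 2 * s * ‖C - Bhα‖ ≤ ‖g - gt‖ := tik_L2 Q hα (C - Bhα) (g - gt) hf
  -- ‖T - Q‖ ≤ ‖T - S‖ + ‖S - S∘P‖
  have hTQ : ‖T - Q‖ ≤ ‖T - S‖ + ‖S - S ∘L P‖ := by
    have : T - Q = (T - S) + (S - S ∘L P) := by rw [hQdef]; abel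
    rw [this]
    exact norm_add_le _ _
  -- triangle inequality
  have htri : ‖Bα - Bhα‖ ≤ ‖n₁‖ + ‖d₂‖ + ‖C - Bhα‖ := by
    have : Bα - Bhα = (-n₁ + d₂) + (C - Bhα) := by rw [← hkey]; abel
    rw [this]
    calc ‖(-n₁ + d₂) + (C - Bhα)‖ ≤ ‖-n₁ + d₂‖ + ‖C - Bhα‖ := norm_add_le _ _
      _ ≤ ‖-n₁‖ + ‖d₂‖ + ‖C - Bhα‖ := by linarith [norm_add_le (-n₁) d₂]
      _ = ‖n₁‖ + ‖d₂‖ + ‖C - Bhα‖ := by rw [norm_neg]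
  -- final arithmetic
  have hsum : 2 * s * (‖n₁‖ + ‖d₂‖ + ‖C - Bhα‖)
      ≤ 2 * ((‖T - S‖ + ‖S - S ∘L P‖) * ‖B‖) + ‖g - gt‖ := by
    have hq := mul_le_mul_of_nonneg_right hTQ (norm_nonneg B)
    ring_nf at hn₁le hd₂le hfle hq ⊢
    linarith
  calc ‖Bα - Bhα‖ ≤ ‖n₁‖ + ‖d₂‖ + ‖C - Bhα‖ := htri
    _ ≤ (2 * ((‖T - S‖ + ‖S - S ∘L P‖) * ‖B‖) + ‖g - gt‖) / (2 * s) := by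
        rw [le_div_iff₀ (by positivity : (0:ℝ) < 2 * s)]
        linarith [hsum]
    _ = ‖T - S‖ / s * ‖B‖ + ‖S - S ∘L P‖ / s * ‖B‖ + ‖g - gt‖ / (2 * s) := by
        field_simp
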